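/- arXiv:math/0308130 — 2 statements merged into one kernel-verified Lean document; each statement's English description precedes it below -/
import Mathlib

section
/- Let Ω be a bounded domain in ℝⁿ, and let g, h : ℝ² → ℝ be C¹ functions satisfying (G₁): g_u < 0, g_v < 0, h_u < 0, h_v < 0 everywhere, and (G₂): there exist c₀ > 0, c₁ > 0 with g(u,0) ≤ 0 for u ≥ c₀ and h(0,v) ≤ 0 for v ≥ c₁. Assume g(0,c₁) > λ₁ and h(c₀,0) > λ₁. Then the pair (ū, v̄) = (θ_{g(·,0)}, θ_{h(0,·)}) satisfies Δū + ū g(ū, v̄) < 0 and Δv̄ + v̄ h(ū, v̄) < 0 in Ω, i.e. it is a strict upper solution of the system Δu + u g(u,v) = 0, Δv + v h(u,v) = 0 with zero Dirichlet boundary data. -/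
open MeasureTheory Set

noncomputable def lap {n : ℕ} (u : EuclideanSpace ℝ (Fin n) → ℝ)
    (x : EuclideanSpace ℝ (Fin n)) : ℝ :=
  ∑ i : Fin n, fderiv ℝ (fun y => fderiv ℝ u y (EuclideanSpace.single i 1)) x
    (EuclideanSpace.single i 1)

/-- `u` is a nontrivial eigenfunction of `-Δ + q` with eigenvalue `lam`
on `Ω` with homogeneous Dirichlet boundary condition. -/
def IsDirichletEigenpair {n : ℕ} (Ω : Set (EuclideanSpace ℝ (Fin n)))
    (q : EuclideanSpace ℝ (Fin n) → ℝ) (lam : ℝ)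
    (u : EuclideanSpace ℝ (Fin n) → ℝ) : Prop :=
  ContDiffOn ℝ 2 u Ω ∧ ContinuousOn u (closure Ω) ∧
  (∃ x ∈ Ω, u x ≠ 0) ∧
  (∀ x ∈ Ω, -lap u x + q x * u x = lam * u x) ∧
  (∀ x ∈ frontier Ω, u x = 0)

/-- `lam` is the first (smallest) Dirichlet eigenvalue of `-Δ + q` on `Ω`. -/
def IsFirstEigenvalue {n : ℕ} (Ω : Set (EuclideanSpace ℝ (Fin n)))
    (q : EuclideanSpace ℝ (Fin n) → ℝ) (lam : ℝ) : Prop :=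
  (∃ u, IsDirichletEigenpair Ω q lam u) ∧
  ∀ μ : ℝ, (∃ u, IsDirichletEigenpair Ω q μ u) → lam ≤ μ

/-- `u` is a positive solution of the logistic problem
`Δu + u f(u) = 0` in `Ω`, `u > 0` in `Ω`, `u = 0` on `∂Ω`. -/
def IsLogisticSolution {n : ℕ} (Ω : Set (EuclideanSpace ℝ (Fin n))) (f : ℝ → ℝ)
    (u : EuclideanSpace ℝ (Fin n) → ℝ) : Prop :=
  ContDiffOn ℝ 2 u Ω ∧ ContinuousOn u (closure Ω) ∧
  (∀ x ∈ Ω, lap u x + u x * f (u x) = 0) ∧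
  (∀ x ∈ Ω, 0 < u x) ∧
  (∀ x ∈ frontier Ω, u x = 0)

/-- `(u, v)` solves the competition system
`Δu + u g(u,v) = 0`, `Δv + v h(u,v) = 0` in `Ω`, `(u,v) = (0,0)` on `∂Ω`. -/
def IsSystemSolution {n : ℕ} (Ω : Set (EuclideanSpace ℝ (Fin n)))
    (g h : ℝ → ℝ → ℝ) (u v : EuclideanSpace ℝ (Fin n) → ℝ) : Prop :=
  ContDiffOn ℝ 2 u Ω ∧ ContDiffOn ℝ 2 v Ω ∧
  ContinuousOn u (closure Ω) ∧ ContinuousOn v (closure Ω) ∧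
  (∀ x ∈ Ω, lap u x + u x * g (u x) (v x) = 0) ∧
  (∀ x ∈ Ω, lap v x + v x * h (u x) (v x) = 0) ∧
  (∀ x ∈ frontier Ω, u x = 0 ∧ v x = 0)

/-- `(u₁,...,u_N)` solves the `N`-species system
`Δuᵢ + uᵢ gᵢ(u₁,...,u_N) = 0` in `Ω`, `uᵢ = 0` on `∂Ω`. -/
def IsNSystemSolution {n N : ℕ} (Ω : Set (EuclideanSpace ℝ (Fin n)))
    (g : Fin N → (Fin N → ℝ) → ℝ)
    (u : Fin N → EuclideanSpace ℝ (Fin n) → ℝ) : Prop :=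
  ∀ i, ContDiffOn ℝ 2 (u i) Ω ∧ ContinuousOn (u i) (closure Ω) ∧
    (∀ x ∈ Ω, lap (u i) x + u i x * g i (fun j => u j x) = 0) ∧
    (∀ x ∈ frontier Ω, u i x = 0)

/-- `(θ_{g(·,0)}, θ_{h(0,·)})` is a strict upper solution of the competition system. -/
theorem competition_upper_solution {n : ℕ} (Ω : Set (EuclideanSpace ℝ (Fin n)))
    (hΩo : IsOpen Ω) (hΩc : IsConnected Ω) (hΩb : Bornology.IsBounded Ω)
    (g h : ℝ → ℝ → ℝ)
    (hg : ContDiff ℝ 1 (Function.uncurry g)) (hh : ContDiff ℝ 1 (Function.uncurry h))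
    (hgu : ∀ a b : ℝ, deriv (fun t => g t b) a < 0)
    (hgv : ∀ a b : ℝ, deriv (fun t => g a t) b < 0)
    (hhu : ∀ a b : ℝ, deriv (fun t => h t b) a < 0)
    (hhv : ∀ a b : ℝ, deriv (fun t => h a t) b < 0)
    (c₀ c₁ : ℝ) (hc₀ : 0 < c₀) (hc₁ : 0 < c₁)
    (hG2g : ∀ t, c₀ ≤ t → g t 0 ≤ 0) (hG2h : ∀ t, c₁ ≤ t → h 0 t ≤ 0)
    (lam₁ : ℝ) (hlam : IsFirstEigenvalue Ω (fun _ => 0) lam₁)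
    (hge : lam₁ < g 0 c₁) (hhe : lam₁ < h c₀ 0)
    (θg0 θh0 : EuclideanSpace ℝ (Fin n) → ℝ)
    (hθ₂ : IsLogisticSolution Ω (fun t => g t 0) θg0)
    (hθ₄ : IsLogisticSolution Ω (fun t => h 0 t) θh0) :
    ∀ x ∈ Ω, lap θg0 x + θg0 x * g (θg0 x) (θh0 x) < 0 ∧
      lap θh0 x + θh0 x * h (θg0 x) (θh0 x) < 0 := by
  intro x hx
  obtain ⟨_, _, hgeq, hgpos, _⟩ := hθ₂
  obtain ⟨_, _, hheq, hhpos, _⟩ := hθ₄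
  constructor
  · have h1 : g (θg0 x) (θh0 x) < g (θg0 x) 0 :=
      strictAnti_of_deriv_neg (hgv (θg0 x)) (hhpos x hx)
    have h2 := hgeq x hx
    nlinarith [hgpos x hx]
  · have h1 : h (θg0 x) (θh0 x) < h 0 (θh0 x) :=
      strictAnti_of_deriv_neg (fun t => hhu t (θh0 x)) (hgpos x hx)
    have h2 := hheq x hx
    nlinarith [hhpos x hx]
end

section
/- Let Ω be a bounded domain in ℝⁿ, and let g, h : ℝ² → ℝ be C¹ functions satisfying (G₁): g_u < 0, g_v < 0, h_u < 0, h_v < 0 everywhere, and (G₂): there exist c₀ > 0, c₁ > 0 with g(u,0) ≤ 0 for u ≥ c₀ and h(0,v) ≤ 0 for v ≥ c₁. Assume g(0,c₁) > λ₁ and h(c₀,0) > λ₁. Then the pair (u̲, v̲) = (θ_{g(·,c₁)}, θ_{h(c₀,·)}) satisfies u̲ ≤ c₀, v̲ ≤ c₁, Δu̲ + u̲ g(u̲, v̲) ≥ 0 and Δv̲ + v̲ h(u̲, v̲) ≥ 0 in Ω, i.e. it is a lower solution of the system Δu + u g(u,v) = 0, Δv + v h(u,v) = 0 with zero Dirichlet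 boundary data. -/
open MeasureTheory Set

open Filter Topology

/-- 1D second derivative test at a local max (at the point 0). -/
lemma second_deriv_test_max {φ ψ : ℝ → ℝ} {c : ℝ}
    (hφ : ∀ᶠ t in 𝓝 (0:ℝ), HasDerivAt φ (ψ t) t)
    (hψ : HasDerivAt ψ c 0)
    (hmax : IsLocalMax φ 0) : c ≤ 0 := by
  by_contra hc
  push_neg at hc
  have hψ0 : ψ 0 = 0 := by
    have h0 := hφ.self_of_nhds
    rw [← h0.deriv]; exact hmax.deriv_eq_zero
  have hslope : Tendsto (slope ψ 0) (𝓝[≠] 0) (𝓝 c) :=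
    hasDerivAt_iff_tendsto_slope.mp hψ
  have hslope' : Tendsto (slope ψ 0) (𝓝[>] 0) (𝓝 c) :=
    hslope.mono_left (nhdsWithin_mono _ (fun t ht => ne_of_gt ht))
  have hEpos : ∀ᶠ t in 𝓝[>] (0:ℝ), 0 < ψ t := by
    filter_upwards [hslope'.eventually (eventually_gt_nhds hc), self_mem_nhdsWithin]
      with t ht ht0
    have : slope ψ 0 t = ψ t / t := by
      simp [slope_def_field, hψ0]
    rw [this] at ht
    rcases div_pos_iff.mp ht with ⟨h1, _⟩ | ⟨_, h2⟩
    · exact h1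
    · exact absurd ht0 (by simp at h2 ⊢; linarith)
  obtain ⟨u, hu, hIoc⟩ := mem_nhdsGT_iff_exists_Ioc_subset.mp hEpos
  obtain ⟨ε, hε, hball⟩ := Metric.eventually_nhds_iff.mp (hφ.and hmax)
  set δ : ℝ := min u (ε / 2) with hδdef
  have hδpos : 0 < δ := lt_min hu (by linarith)
  have hmem : ∀ t ∈ Icc (0:ℝ) δ, HasDerivAt φ (ψ t) t ∧ φ t ≤ φ 0 := by
    intro t ht
    apply hball
    rw [Real.dist_eq, sub_zero, abs_of_nonneg ht.1]
    calc t ≤ δ := ht.2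
    _ ≤ ε / 2 := min_le_right _ _
    _ < ε := by linarith
  have hmono : StrictMonoOn φ (Icc 0 δ) := by
    apply strictMonoOn_of_deriv_pos (convex_Icc _ _)
    · exact fun t ht => ((hmem t ht).1).continuousAt.continuousWithinAt
    · intro t ht
      rw [interior_Icc] at ht
      rw [((hmem t ⟨le_of_lt ht.1, le_of_lt ht.2⟩).1).deriv]
      exact hIoc ⟨ht.1, le_trans (le_of_lt ht.2) (min_le_left _ _)⟩
  have h1 : φ 0 < φ δ := hmono ⟨le_rfl, le_of_lt hδpos⟩ ⟨le_of_lt hδpos, le_rfl⟩ hδpos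
  have h2 : φ δ ≤ φ 0 := (hmem δ ⟨le_of_lt hδpos, le_rfl⟩).2
  linarith

/-- at an interior local max of a C² function, every pure second directional
derivative is nonpositive. -/
lemma second_dirderiv_nonpos_of_localMax {E : Type*} [NormedAddCommGroup E]
    [NormedSpace ℝ E] {u : E → ℝ} {x₀ : E}
    (hu : ContDiffAt ℝ 2 u x₀) (hmax : IsLocalMax u x₀) (e : E) :
    fderiv ℝ (fun y => fderiv ℝ u y e) x₀ e ≤ 0 := by
  set L : ℝ → E := fun t => x₀ + t • e with hLdef
  have hL : ∀ t : ℝ, HasDerivAt L e t := by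
    intro t
    simpa [hLdef] using (((hasDerivAt_id t).smul_const e).const_add x₀)
  have hL0 : L 0 = x₀ := by simp [hLdef]
  have hLcont : Tendsto L (𝓝 0) (𝓝 x₀) := by
    rw [← hL0]; exact (hL 0).continuousAt.tendsto
  have hev : ∀ᶠ y in 𝓝 x₀, ContDiffAt ℝ 2 u y := hu.eventually (by norm_num)
  have hφ : ∀ᶠ t in 𝓝 (0:ℝ), HasDerivAt (fun t => u (L t)) (fderiv ℝ u (L t) e) t := by
    filter_upwards [hLcont.eventually hev] with t ht
    exact (ht.differentiableAt (by norm_num)).hasFDerivAt.comp_hasDerivAt t (hL t)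
  have h2 : HasFDerivAt (fderiv ℝ u) (fderiv ℝ (fderiv ℝ u) x₀) x₀ :=
    ((hu.fderiv_right (m := 1) (by norm_num)).differentiableAt (by norm_num)).hasFDerivAt
  have hcomp : HasDerivAt (fun t => fderiv ℝ u (L t)) (fderiv ℝ (fderiv ℝ u) x₀ e) 0 := by
    have h2' : HasFDerivAt (fderiv ℝ u) (fderiv ℝ (fderiv ℝ u) x₀) (L 0) := hL0 ▸ h2
    exact h2'.comp_hasDerivAt 0 (hL 0)
  have hψ : HasDerivAt (fun t => fderiv ℝ u (L t) e) ((fderiv ℝ (fderiv ℝ u) x₀ e) e) 0 := by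
    have := hcomp.clm_apply (hasDerivAt_const 0 e)
    simpa using this
  have hmax' : IsLocalMax (fun t => u (L t)) 0 := by
    have := hLcont.eventually hmax
    simpa [IsLocalMax, IsMaxFilter, hL0] using this
  have key : (fderiv ℝ (fderiv ℝ u) x₀ e) e ≤ 0 :=
    second_deriv_test_max hφ hψ hmax'
  have heq : fderiv ℝ (fun y => fderiv ℝ u y e) x₀ e = (fderiv ℝ (fderiv ℝ u) x₀ e) e := by
    have hfd : HasFDerivAt (fun y => fderiv ℝ u y e)
        ((fderiv ℝ u x₀).comp (0 : E →L[ℝ] E) + (fderiv ℝ (fderiv ℝ u) x₀).flip e) x₀ :=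
      h2.clm_apply (hasFDerivAt_const e x₀)
    rw [hfd.fderiv]
    simp
  rw [heq]; exact key

/-- maximum principle bound for the logistic equation. -/
lemma logistic_bound {n : ℕ} {Ω : Set (EuclideanSpace ℝ (Fin n))} (hΩo : IsOpen Ω)
    (hΩb : Bornology.IsBounded Ω) {f : ℝ → ℝ} {u : EuclideanSpace ℝ (Fin n) → ℝ} {c : ℝ}
    (hu : IsLogisticSolution Ω f u) (hf : ∀ t, c ≤ t → f t < 0) :
    ∀ x ∈ Ω, u x ≤ c := by
  obtain ⟨hC2, hcont, hpde, hpos, hbd⟩ := hu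
  intro x hx
  have hK : IsCompact (closure Ω) := hΩb.isCompact_closure
  obtain ⟨x₀, hx₀mem, hx₀max⟩ := hK.exists_isMaxOn ⟨x, subset_closure hx⟩ hcont
  by_contra hxc
  push_neg at hxc
  have hxmax : u x ≤ u x₀ := isMaxOn_iff.mp hx₀max x (subset_closure hx)
  have hMc : c < u x₀ := lt_of_lt_of_le hxc hxmax
  have hx₀Ω : x₀ ∈ Ω := by
    by_contra hne
    have hfr : x₀ ∈ frontier Ω := by
      rw [frontier, hΩo.interior_eq]; exact ⟨hx₀mem, hne⟩
    have h0 := hbd x₀ hfr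
    have hxpos := hpos x hx
    linarith
  have hmax : IsLocalMax u x₀ := by
    filter_upwards [hΩo.mem_nhds hx₀Ω] with y hy
    exact isMaxOn_iff.mp hx₀max y (subset_closure hy)
  have hCA : ContDiffAt ℝ 2 u x₀ := hC2.contDiffAt (hΩo.mem_nhds hx₀Ω)
  have hlap : lap u x₀ ≤ 0 :=
    Finset.sum_nonpos fun i _ => second_dirderiv_nonpos_of_localMax hCA hmax _
  have hpde' := hpde x₀ hx₀Ω
  have hfneg : f (u x₀) < 0 := hf _ hMc.le
  have hppos : 0 < u x₀ := hpos x₀ hx₀Ω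
  nlinarith [mul_neg_of_pos_of_neg hppos hfneg]

/-- `(θ_{g(·,c₁)}, θ_{h(c₀,·)})` satisfies `θ_{g(·,c₁)} ≤ c₀`, `θ_{h(c₀,·)} ≤ c₁`
and is a lower solution of the competition system. -/
theorem competition_lower_solution {n : ℕ} (Ω : Set (EuclideanSpace ℝ (Fin n)))
    (hΩo : IsOpen Ω) (hΩc : IsConnected Ω) (hΩb : Bornology.IsBounded Ω)
    (g h : ℝ → ℝ → ℝ)
    (hg : ContDiff ℝ 1 (Function.uncurry g)) (hh : ContDiff ℝ 1 (Function.uncurry h))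
    (hgu : ∀ a b : ℝ, deriv (fun t => g t b) a < 0)
    (hgv : ∀ a b : ℝ, deriv (fun t => g a t) b < 0)
    (hhu : ∀ a b : ℝ, deriv (fun t => h t b) a < 0)
    (hhv : ∀ a b : ℝ, deriv (fun t => h a t) b < 0)
    (c₀ c₁ : ℝ) (hc₀ : 0 < c₀) (hc₁ : 0 < c₁)
    (hG2g : ∀ t, c₀ ≤ t → g t 0 ≤ 0) (hG2h : ∀ t, c₁ ≤ t → h 0 t ≤ 0)
    (lam₁ : ℝ) (hlam : IsFirstEigenvalue Ω (fun _ => 0) lam₁)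
    (hge : lam₁ < g 0 c₁) (hhe : lam₁ < h c₀ 0)
    (θgc₁ θhc₀ : EuclideanSpace ℝ (Fin n) → ℝ)
    (hθ₁ : IsLogisticSolution Ω (fun t => g t c₁) θgc₁)
    (hθ₃ : IsLogisticSolution Ω (fun t => h c₀ t) θhc₀) :
    ∀ x ∈ Ω, θgc₁ x ≤ c₀ ∧ θhc₀ x ≤ c₁ ∧
      0 ≤ lap θgc₁ x + θgc₁ x * g (θgc₁ x) (θhc₀ x) ∧
      0 ≤ lap θhc₀ x + θhc₀ x * h (θgc₁ x) (θhc₀ x) := by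
  intro x hx
  have hAg : ∀ a, StrictAnti (fun t => g a t) := fun a => strictAnti_of_deriv_neg (hgv a)
  have hAh : ∀ b, StrictAnti (fun t => h t b) :=
    fun b => strictAnti_of_deriv_neg (fun a => hhu a b)
  have hfg : ∀ t, c₀ ≤ t → g t c₁ < 0 :=
    fun t ht => lt_of_lt_of_le (hAg t hc₁) (hG2g t ht)
  have hfh : ∀ t, c₁ ≤ t → h c₀ t < 0 :=
    fun t ht => lt_of_lt_of_le (hAh t hc₀) (hG2h t ht)
  have hb1 : ∀ y ∈ Ω, θgc₁ y ≤ c₀ := logistic_bound hΩo hΩb hθ₁ hfg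
  have hb2 : ∀ y ∈ Ω, θhc₀ y ≤ c₁ := logistic_bound hΩo hΩb hθ₃ hfh
  refine ⟨hb1 x hx, hb2 x hx, ?_, ?_⟩
  · have hpde := hθ₁.2.2.1 x hx
    have hpos := hθ₁.2.2.2.1 x hx
    have hmono : g (θgc₁ x) c₁ ≤ g (θgc₁ x) (θhc₀ x) := (hAg (θgc₁ x)).antitone (hb2 x hx)
    nlinarith [mul_nonneg hpos.le (sub_nonneg.mpr hmono)]
  · have hpde := hθ₃.2.2.1 x hx
    have hpos := hθ₃.2.2.2.1 x hx
    have hmono : h c₀ (θhc₀ x) ≤ h (θgc₁ x) (θhc₀ x) := (hAh (θhc₀ x)).antitone (hb1 x hx)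
    nlinarith [mul_nonneg hpos.le (sub_nonneg.mpr hmono)]
end
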